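/- Let γ satisfy Hypothesis (Γ). Then there exists a constant C₁ > 0 such that C₁·|s − t| ≤ ‖γ(s) − γ(t)‖ ≤ |s − t| for all s, t ∈ ℝ, where ‖·‖ is the Euclidean norm on ℝ². -/

import Mathlib

open Real Set

private lemma euc_norm_eq (x : EuclideanSpace ℝ (Fin 2)) :
    ‖x‖ = Real.sqrt ((x 0)^2 + (x 1)^2) := by
  rw [EuclideanSpace.norm_eq]; simp [Fin.sum_univ_two, Real.norm_eq_abs, sq_abs]

private lemma euc_proj_le (x : EuclideanSpace ℝ (Fin 2)) (a c : ℝ) (h : a^2+c^2=1) :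
    a * x 0 + c * x 1 ≤ ‖x‖ := by
  rw [euc_norm_eq]
  rcases le_or_gt (a * x 0 + c * x 1) 0 with h0 | h0
  · exact h0.trans (Real.sqrt_nonneg _)
  · rw [show a * x 0 + c * x 1 = Real.sqrt ((a * x 0 + c * x 1)^2) from (Real.sqrt_sq h0.le).symm]
    apply Real.sqrt_le_sqrt
    nlinarith [sq_nonneg (a * x 1 - c * x 0)]

private noncomputable def eucVec (a c : ℝ) : EuclideanSpace ℝ (Fin 2) :=
  (WithLp.equiv 2 (Fin 2 → ℝ)).symm ![a, c]

private lemma euc_compact_min (γ : ℝ → EuclideanSpace ℝ (Fin 2)) (hc : Continuous γ)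
    (hinj : Function.Injective γ) (L δ : ℝ) (hδ : 0 < δ) :
    ∃ ε > 0, ∀ s t : ℝ, |s| ≤ L → |t| ≤ L → δ ≤ |s - t| → ε ≤ ‖γ s - γ t‖ := by
  have key : ∀ K : Set (ℝ × ℝ), IsCompact K → K.Nonempty →
      ∃ p ∈ K, ∀ q ∈ K, ‖γ p.1 - γ p.2‖ ≤ ‖γ q.1 - γ q.2‖ := by
    intro K hKc hne
    have hFc : Continuous (fun p : ℝ × ℝ => ‖γ p.1 - γ p.2‖) :=
      ((hc.comp continuous_fst).sub (hc.comp continuous_snd)).norm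
    obtain ⟨p, hpK, hmin⟩ := hKc.exists_isMinOn hne hFc.continuousOn
    exact ⟨p, hpK, fun q hq => hmin hq⟩
  have hKc : IsCompact ((Icc (-L) L ×ˢ Icc (-L) L) ∩ {p : ℝ × ℝ | δ ≤ |p.1 - p.2|}) :=
    (isCompact_Icc.prod isCompact_Icc).inter_right
      (isClosed_le continuous_const (continuous_fst.sub continuous_snd).abs)
  have hmem : ∀ s t : ℝ, |s| ≤ L → |t| ≤ L → δ ≤ |s - t| →
      (s, t) ∈ (Icc (-L) L ×ˢ Icc (-L) L) ∩ {p : ℝ × ℝ | δ ≤ |p.1 - p.2|} := by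
    intro s t hs ht hst
    exact ⟨⟨⟨neg_le_of_abs_le hs, le_of_abs_le hs⟩, ⟨neg_le_of_abs_le ht, le_of_abs_le ht⟩⟩, hst⟩
  rcases ((Icc (-L) L ×ˢ Icc (-L) L) ∩ {p : ℝ × ℝ | δ ≤ |p.1 - p.2|}).eq_empty_or_nonempty
    with he | hne
  · exact ⟨1, one_pos, fun s t hs ht hst =>
      absurd (he ▸ hmem s t hs ht hst) (Set.notMem_empty _)⟩
  · obtain ⟨p, hpK, hmin⟩ := key _ hKc hne
    refine ⟨‖γ p.1 - γ p.2‖, ?_, fun s t hs ht hst => ?_⟩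
    · rw [gt_iff_lt, norm_pos_iff, sub_ne_zero]
      intro h
      have h12 : p.1 = p.2 := hinj h
      have h2 := hpK.2
      rw [Set.mem_setOf_eq, h12, sub_self, abs_zero] at h2
      linarith
    · have := hmin (s, t) (hmem s t hs ht hst)
      exact this

private lemma euc_local_lower (γ : ℝ → EuclideanSpace ℝ (Fin 2)) (hd : Differentiable ℝ γ)
    (hunit : ∀ s : ℝ, ‖deriv γ s‖ = 1) (δ : ℝ)
    (hδ2 : ∀ u v : ℝ, |u - v| ≤ δ → ‖deriv γ u - deriv γ v‖ ≤ 1/2)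
    (s t : ℝ) (hts : t < s) (hst : s - t ≤ δ) : (s - t)/2 ≤ ‖γ s - γ t‖ := by
  set d := deriv γ t with hdd
  set F : ℝ → ℝ := fun u => (@inner ℝ _ _ (γ u - γ t) d) - u/2 with hF
  have hFd : ∀ u, HasDerivAt F ((@inner ℝ _ _ (deriv γ u) d) - 1/2) u := by
    intro u
    have h1 : HasDerivAt (fun u => (@inner ℝ _ _ (γ u - γ t) d))
        (@inner ℝ _ _ (deriv γ u) d) u := by
      have := ((hd u).hasDerivAt.sub_const (γ t)).inner ℝ (hasDerivAt_const u d)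
      simpa using this
    have h2 : HasDerivAt (fun u : ℝ => u/2) (1/2 : ℝ) u := by
      simpa using (hasDerivAt_id u).div_const 2
    exact h1.sub h2
  have hmono : MonotoneOn F (Icc t s) := by
    apply monotoneOn_of_deriv_nonneg (convex_Icc t s)
      (fun u _ => (hFd u).differentiableAt.continuousAt.continuousWithinAt)
      (fun u _ => (hFd u).differentiableAt.differentiableWithinAt)
    intro u hu
    rw [interior_Icc] at hu
    rw [(hFd u).deriv]
    have hud : ‖deriv γ u - d‖ ≤ 1/2 :=
      hδ2 u t (by rw [abs_le]; constructor <;> [linarith [hu.1]; linarith [hu.2]])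
    have hexp : ‖deriv γ u - d‖^2 = ‖deriv γ u‖^2 - 2*(@inner ℝ _ _ (deriv γ u) d) + ‖d‖^2 :=
      norm_sub_sq_real _ _
    have h1 := hunit u
    have h2 := hunit t
    rw [← hdd] at h2
    nlinarith [norm_nonneg (deriv γ u - d)]
  have hts' := hmono (left_mem_Icc.2 hts.le) (right_mem_Icc.2 hts.le) hts.le
  have hFt : F t = -(t/2) := by simp [hF]
  have hFs : (@inner ℝ _ _ (γ s - γ t) d) ≤ ‖γ s - γ t‖ := by
    have h3 := real_inner_le_norm (γ s - γ t) d
    have h2 := hunit t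
    rw [← hdd] at h2
    rw [h2, mul_one] at h3
    exact h3
  have hFsv : F s = (@inner ℝ _ _ (γ s - γ t) d) - s/2 := rfl
  rw [hFt, hFsv] at hts'
  linarith

set_option maxHeartbeats 1600000 in
/-- Let `γ` satisfy Hypothesis (Γ). Then there exists a constant `C₁ > 0`
such that `C₁ * |s - t| ≤ ‖γ s - γ t‖ ≤ |s - t|` for all `s t : ℝ`. -/
theorem stmt_0 (γ : ℝ → EuclideanSpace ℝ (Fin 2))
    (hsmooth : ContDiff ℝ (⊤ : ℕ∞) γ) (hinj : Function.Injective γ)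
    (hunit : ∀ s : ℝ, ‖deriv γ s‖ = 1)
    (M am bm cm dm ap bp cp dp : ℝ) (hM : 0 < M)
    (hm1 : am ^ 2 + cm ^ 2 = 1) (hp1 : ap ^ 2 + cp ^ 2 = 1)
    (hne : (am, cm) ≠ (-ap, -cp))
    (hγm : ∀ s : ℝ, s < -M → γ s 0 = am * s + bm ∧ γ s 1 = cm * s + dm)
    (hγp : ∀ s : ℝ, s > M → γ s 0 = ap * s + bp ∧ γ s 1 = cp * s + dp) :
    ∃ C₁ > 0, ∀ s t : ℝ, C₁ * |s - t| ≤ ‖γ s - γ t‖ ∧ ‖γ s - γ t‖ ≤ |s - t| := by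
  have hd : Differentiable ℝ γ := hsmooth.differentiable (by simp)
  have hcont : Continuous γ := hd.continuous
  -- Lipschitz upper bound
  have hlip : ∀ s t : ℝ, ‖γ s - γ t‖ ≤ |s - t| := by
    intro s t
    have hl : LipschitzWith 1 γ := lipschitzWith_of_nnnorm_deriv_le hd (fun x => by
      simp [← norm_toNNReal, hunit x])
    have := hl.dist_le_mul s t
    simpa [Real.dist_eq, dist_eq_norm] using this
  -- derivative is constant on the two ends
  have hDp : ∀ u : ℝ, M < u → deriv γ u = eucVec ap cp := by
    intro u hu
    have h1 : HasDerivAt (fun u : ℝ => u • eucVec ap cp + eucVec bp dp) (eucVec ap cp) u := by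
      simpa using ((hasDerivAt_id u).smul_const (eucVec ap cp)).add_const (eucVec bp dp)
    have h2 : HasDerivAt γ (eucVec ap cp) u := by
      apply h1.congr_of_eventuallyEq
      filter_upwards [isOpen_Ioi.mem_nhds (show u ∈ Ioi M from hu)] with y hy
      ext i
      fin_cases i
      · simp [eucVec, (hγp y hy).1]; ring
      · simp [eucVec, (hγp y hy).2]; ring
    exact h2.deriv
  have hDm : ∀ u : ℝ, u < -M → deriv γ u = eucVec am cm := by
    intro u hu
    have h1 : HasDerivAt (fun u : ℝ => u • eucVec am cm + eucVec bm dm) (eucVec am cm) u := by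
      simpa using ((hasDerivAt_id u).smul_const (eucVec am cm)).add_const (eucVec bm dm)
    have h2 : HasDerivAt γ (eucVec am cm) u := by
      apply h1.congr_of_eventuallyEq
      filter_upwards [isOpen_Iio.mem_nhds (show u ∈ Iio (-M) from hu)] with y hy
      ext i
      fin_cases i
      · simp [eucVec, (hγm y hy).1]; ring
      · simp [eucVec, (hγm y hy).2]; ring
    exact h2.deriv
  -- uniform continuity of the derivative
  have hdc : Continuous (deriv γ) := hsmooth.continuous_deriv (mod_cast le_top)
  obtain ⟨δ, hδpos, hδ2⟩ :
      ∃ δ > 0, ∀ u v : ℝ, |u - v| ≤ δ → ‖deriv γ u - deriv γ v‖ ≤ 1/2 := by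
    have h := (isCompact_Icc (a := -(M+2)) (b := M+2)).uniformContinuousOn_of_continuous
      hdc.continuousOn
    rw [Metric.uniformContinuousOn_iff_le] at h
    obtain ⟨δ0, hδ0, hh⟩ := h (1/2) (by norm_num)
    refine ⟨min (δ0/2) 1, by positivity, ?_⟩
    have aux : ∀ u v : ℝ, u ≤ v → |u - v| ≤ min (δ0/2) 1 →
        ‖deriv γ u - deriv γ v‖ ≤ 1/2 := by
      intro u v huv habs
      have h1 : |u - v| ≤ δ0/2 := habs.trans (min_le_left _ _)
      have h2 : |u - v| ≤ 1 := habs.trans (min_le_right _ _)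
      rw [abs_le] at h2
      by_cases hc1 : M + 2 < v
      · have hu' : M < u := by linarith [h2.1]
        have hv' : M < v := by linarith
        rw [hDp u hu', hDp v hv', sub_self, norm_zero]; norm_num
      · by_cases hc2 : u < -(M+2)
        · have hu' : u < -M := by linarith
          have hv' : v < -M := by linarith [h2.2]
          rw [hDm u hu', hDm v hv', sub_self, norm_zero]; norm_num
        · push_neg at hc1 hc2
          have := hh u ⟨hc2, by linarith⟩ v ⟨by linarith, hc1⟩
            (by rw [Real.dist_eq]; linarith [abs_nonneg (u-v), h1])
          rwa [dist_eq_norm] at this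
    intro u v habs
    rcases le_total u v with h | h
    · exact aux u v h habs
    · rw [norm_sub_rev]
      exact aux v u h (by rwa [abs_sub_comm])
  -- the angle constant
  set ρ : ℝ := 1 + (am*ap + cm*cp) with hρdef
  have h2ρ : (am+ap)^2 + (cm+cp)^2 = 2*ρ := by
    rw [hρdef]; linear_combination hm1 + hp1
  have hρ0 : 0 ≤ ρ := by nlinarith [sq_nonneg (am+ap), sq_nonneg (cm+cp)]
  have hρ : 0 < ρ := by
    rcases hρ0.lt_or_eq with h | h
    · exact h
    · exfalso
      have ha1 : (am+ap)^2 = 0 := by nlinarith [sq_nonneg (am+ap), sq_nonneg (cm+cp)]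
      have ha2 : (cm+cp)^2 = 0 := by nlinarith [sq_nonneg (am+ap), sq_nonneg (cm+cp)]
      have e1 : am = -ap := by nlinarith [ha1]
      have e2 : cm = -cp := by nlinarith [ha2]
      exact hne (by rw [e1, e2])
  -- bound on the compact part of the curve
  obtain ⟨R, hR⟩ : ∃ R, ∀ u ∈ Icc (-M) M, ‖γ u‖ ≤ R :=
    isCompact_Icc.exists_bound_of_continuousOn hcont.continuousOn
  have hR0 : 0 ≤ R := le_trans (norm_nonneg (γ 0)) (hR 0 ⟨by linarith, by linarith⟩)
  set C2 : ℝ := R + |ap*bp + cp*dp| with hC2def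
  set C3 : ℝ := R + |am*bm + cm*dm| with hC3def
  set e : ℝ := (ap+am)*(bp-bm) + (cp+cm)*(dp-dm) with hedef
  set L : ℝ := max (max (2*C2+1) (2*C3+1)) (max (2*|e|/ρ + 1) (M+1)) with hLdef
  have hLC2 : 2*C2 ≤ L := le_trans (by linarith) ((le_max_left _ _).trans (le_max_left _ _))
  have hLC3 : 2*C3 ≤ L := le_trans (by linarith) ((le_max_right _ _).trans (le_max_left _ _))
  have hLe : 2*|e|/ρ ≤ L := le_trans (by linarith) ((le_max_left _ _).trans (le_max_right _ _))
  have hLM : M + 1 ≤ L := (le_max_right _ _).trans (le_max_right _ _)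
  have hLpos : 0 < L := by linarith
  -- minimum on the compact region
  obtain ⟨ε, hεpos, hε⟩ := euc_compact_min γ hcont hinj L δ hδpos
  -- the constant
  set C₁ : ℝ := min (min (1/2) (ε/(2*L))) (min (ρ/4) (1/4)) with hC₁def
  have hC₁pos : 0 < C₁ := by
    apply lt_min (lt_min (by norm_num) (by positivity)) (lt_min (by positivity) (by norm_num))
  have hCa : C₁ ≤ 1/2 := (min_le_left _ _).trans (min_le_left _ _)
  have hCb : C₁ ≤ ε/(2*L) := (min_le_left _ _).trans (min_le_right _ _)
  have hCc : C₁ ≤ ρ/4 := (min_le_right _ _).trans (min_le_left _ _)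
  have hCd : C₁ ≤ 1/4 := (min_le_right _ _).trans (min_le_right _ _)
  clear_value ρ C2 C3 e L C₁
  refine ⟨C₁, hC₁pos, ?_⟩
  suffices key : ∀ s t : ℝ, t < s → C₁ * (s - t) ≤ ‖γ s - γ t‖ by
    intro s t
    refine ⟨?_, hlip s t⟩
    rcases lt_trichotomy t s with h | h | h
    · rw [abs_of_pos (by linarith : (0:ℝ) < s - t)]
      exact key s t h
    · simp [h]
    · rw [abs_of_neg (by linarith : s - t < 0), norm_sub_rev]
      have := key t s h
      convert this using 2
      ring
  intro s t hts
  have hstpos : 0 < s - t := by linarith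
  by_cases h1 : s - t ≤ δ
  · -- local case
    have hloc := euc_local_lower γ hd hunit δ hδ2 s t hts h1
    have := mul_le_mul_of_nonneg_right hCa hstpos.le
    linarith
  push_neg at h1
  by_cases h2 : M < t
  · -- both on the + ray
    have hs' : M < s := h2.trans hts
    have hx0 : (γ s - γ t) 0 = ap*(s-t) := by
      show γ s 0 - γ t 0 = _
      rw [(hγp s hs').1, (hγp t h2).1]; ring
    have hx1 : (γ s - γ t) 1 = cp*(s-t) := by
      show γ s 1 - γ t 1 = _
      rw [(hγp s hs').2, (hγp t h2).2]; ring
    have hnorm : ‖γ s - γ t‖ = s - t := by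
      rw [euc_norm_eq, hx0, hx1,
        show (ap*(s-t))^2 + (cp*(s-t))^2 = (s-t)^2 by linear_combination ((s-t)^2)*hp1]
      exact Real.sqrt_sq hstpos.le
    rw [hnorm]
    have := mul_le_mul_of_nonneg_right (hCd.trans (by norm_num : (1:ℝ)/4 ≤ 1)) hstpos.le
    linarith
  push_neg at h2
  by_cases h3 : s < -M
  · -- both on the - ray
    have ht' : t < -M := hts.trans h3
    have hx0 : (γ s - γ t) 0 = am*(s-t) := by
      show γ s 0 - γ t 0 = _
      rw [(hγm s h3).1, (hγm t ht').1]; ring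
    have hx1 : (γ s - γ t) 1 = cm*(s-t) := by
      show γ s 1 - γ t 1 = _
      rw [(hγm s h3).2, (hγm t ht').2]; ring
    have hnorm : ‖γ s - γ t‖ = s - t := by
      rw [euc_norm_eq, hx0, hx1,
        show (am*(s-t))^2 + (cm*(s-t))^2 = (s-t)^2 by linear_combination ((s-t)^2)*hm1]
      exact Real.sqrt_sq hstpos.le
    rw [hnorm]
    have := mul_le_mul_of_nonneg_right (hCd.trans (by norm_num : (1:ℝ)/4 ≤ 1)) hstpos.le
    linarith
  push_neg at h3
  by_cases h4 : |s| ≤ L ∧ |t| ≤ L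
  · -- compact case
    have hst2L : s - t ≤ 2*L := by
      have := abs_le.1 h4.1; have := abs_le.1 h4.2; linarith
    have hεst := hε s t h4.1 h4.2 (by rw [abs_of_pos hstpos]; linarith)
    calc C₁ * (s - t) ≤ (ε/(2*L)) * (s - t) :=
          mul_le_mul_of_nonneg_right hCb hstpos.le
      _ ≤ (ε/(2*L)) * (2*L) := by
          apply mul_le_mul_of_nonneg_left hst2L (by positivity)
      _ = ε := by field_simp
      _ ≤ ‖γ s - γ t‖ := hεst
  by_cases h5 : t < -M ∧ M < s
  · -- opposite rays, far apart
    obtain ⟨ht', hs'⟩ := h5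
    have hx0 : (γ s - γ t) 0 = ap*s + bp - (am*t + bm) := by
      show γ s 0 - γ t 0 = _
      rw [(hγp s hs').1, (hγm t ht').1]
    have hx1 : (γ s - γ t) 1 = cp*s + dp - (cm*t + dm) := by
      show γ s 1 - γ t 1 = _
      rw [(hγp s hs').2, (hγm t ht').2]
    have b1 := euc_proj_le (γ s - γ t) ap cp hp1
    have b2 := euc_proj_le (γ s - γ t) am cm hm1
    rw [hx0, hx1] at b1 b2
    have h := add_le_add b1 b2
    have heq : ap * (ap*s + bp - (am*t + bm)) + cp * (cp*s + dp - (cm*t + dm))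
        + (am * (ap*s + bp - (am*t + bm)) + cm * (cp*s + dp - (cm*t + dm)))
        = ρ*(s-t) + e := by
      rw [hρdef, hedef]; linear_combination s*hp1 - t*hm1
    rw [heq] at h
    -- s - t is large
    have hstL : L ≤ s - t := by
      rcases not_and_or.1 h4 with hna | hna
      · push_neg at hna
        have habs : s = |s| := (abs_of_pos (by linarith : (0:ℝ) < s)).symm
        linarith [hLM]
      · push_neg at hna
        have habs : -t = |t| := (abs_of_neg (by linarith : t < 0)).symm
        linarith [hLM]
    have hbig : |e| ≤ ρ*(s-t)/2 := by
      rw [div_le_iff₀ hρ] at hLe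
      have h5 := mul_le_mul_of_nonneg_left hstL hρ.le
      have h6 : L * ρ = ρ * L := mul_comm _ _
      linarith
    have hfin : ρ*(s-t)/2 ≤ 2*‖γ s - γ t‖ := by
      have := neg_abs_le e
      linarith
    calc C₁ * (s - t) ≤ (ρ/4) * (s - t) :=
          mul_le_mul_of_nonneg_right hCc hstpos.le
      _ ≤ ‖γ s - γ t‖ := by linarith
  -- remaining: one point in the middle, the other far away
  by_cases h6 : -M ≤ t
  · -- t ∈ [-M, M], s > L
    have htM : |t| ≤ M := abs_le.2 ⟨h6, h2⟩
    have hsabs : L < |s| := by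
      rcases not_and_or.1 h4 with hna | hna
      · exact lt_of_not_ge hna
      · exact absurd (htM.trans (by linarith)) hna
    have hsL : L < s := by
      rcases abs_cases s with ⟨he1, _⟩ | ⟨he1, he2⟩
      · linarith
      · linarith
    have hs' : M < s := by linarith
    have hx0 : (γ s - γ t) 0 = ap*s + bp - γ t 0 := by
      show γ s 0 - γ t 0 = _
      rw [(hγp s hs').1]
    have hx1 : (γ s - γ t) 1 = cp*s + dp - γ t 1 := by
      show γ s 1 - γ t 1 = _
      rw [(hγp s hs').2]
    have b1 := euc_proj_le (γ s - γ t) ap cp hp1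
    rw [hx0, hx1] at b1
    have hlin : ap*(ap*s + bp - γ t 0) + cp*(cp*s + dp - γ t 1)
        = s + (ap*bp + cp*dp) - (ap*(γ t 0) + cp*(γ t 1)) := by
      linear_combination s*hp1
    rw [hlin] at b1
    have hproj : ap*(γ t 0) + cp*(γ t 1) ≤ R :=
      (euc_proj_le (γ t) ap cp hp1).trans (hR t ⟨h6, h2⟩)
    have k1 : s - C2 ≤ ‖γ s - γ t‖ := by
      have := neg_abs_le (ap*bp + cp*dp)
      rw [hC2def]; linarith
    have hst2 : s - t ≤ 2*s := by linarith
    calc C₁ * (s - t) ≤ (1/4) * (s - t) :=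
          mul_le_mul_of_nonneg_right hCd hstpos.le
      _ ≤ s/2 := by linarith
      _ ≤ s - C2 := by linarith
      _ ≤ ‖γ s - γ t‖ := k1
  · -- s ∈ [-M, M], t < -L
    push_neg at h6
    have hsM : s ≤ M := by
      rcases not_and_or.1 h5 with hna | hna
      · exact absurd h6 hna
      · push_neg at hna; exact hna
    have hsabs : |s| ≤ M := abs_le.2 ⟨h3, hsM⟩
    have htabs : L < |t| := by
      rcases not_and_or.1 h4 with hna | hna
      · exact absurd (hsabs.trans (by linarith)) hna
      · exact lt_of_not_ge hna
    have htL : t < -L := by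
      rcases abs_cases t with ⟨he1, _⟩ | ⟨he1, he2⟩
      · linarith
      · linarith
    have ht' : t < -M := by linarith
    have hx0 : (γ s - γ t) 0 = γ s 0 - (am*t + bm) := by
      show γ s 0 - γ t 0 = _
      rw [(hγm t ht').1]
    have hx1 : (γ s - γ t) 1 = γ s 1 - (cm*t + dm) := by
      show γ s 1 - γ t 1 = _
      rw [(hγm t ht').2]
    have b2 := euc_proj_le (γ s - γ t) am cm hm1
    rw [hx0, hx1] at b2
    have hlin : am*(γ s 0 - (am*t + bm)) + cm*(γ s 1 - (cm*t + dm))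
        = (am*(γ s 0) + cm*(γ s 1)) - t - (am*bm + cm*dm) := by
      linear_combination (-t)*hm1
    rw [hlin] at b2
    have hproj : -R ≤ am*(γ s 0) + cm*(γ s 1) := by
      have := (euc_proj_le (γ s) (-am) (-cm) (by linear_combination hm1)).trans
        (hR s ⟨h3, hsM⟩)
      linarith
    have k1 : -t - C3 ≤ ‖γ s - γ t‖ := by
      have := le_abs_self (am*bm + cm*dm)
      rw [hC3def]; linarith
    have hst2 : s - t ≤ -2*t := by linarith
    calc C₁ * (s - t) ≤ (1/4) * (s - t) :=
          mul_le_mul_of_nonneg_right hCd hstpos.le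
      _ ≤ -t/2 := by linarith
      _ ≤ -t - C3 := by linarith
      _ ≤ ‖γ s - γ t‖ := k1
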